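/- Let p, q be polynomials, P an antiderivative of p, q' the derivative of q, and λ > 0. Then the double Gaussian integral Ī(p,q) = ∫_a^b p(x) ∫_{a'}^{b'} e^{−λ²(x−y)²} q(y) dy dx satisfies the reduction formula Ī(p,q) = P(b)I(q,a',b',b) − P(a)I(q,a',b',a) + q(b')I(P,a,b,b') − q(a')I(P,a,b,a') − Ī(P,q'), where I(r,c,d,l) = ∫_c^d r(x) e^{−λ²(x−l)²} dx. -/

import Mathlib

open intervalIntegral Polynomial MeasureTheory

lemma stmt17_swap {f : ℝ → ℝ → ℝ} (hf : Continuous (Function.uncurry f)) {a b c d : ℝ}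
    (hab : a ≤ b) (hcd : c ≤ d) :
    ∫ x in a..b, ∫ y in c..d, f x y = ∫ y in c..d, ∫ x in a..b, f x y := by
  simp only [intervalIntegral.integral_of_le hab, intervalIntegral.integral_of_le hcd]
  apply MeasureTheory.integral_integral_swap
  rw [Measure.prod_restrict]
  have h : IntegrableOn (Function.uncurry f) (Set.Icc a b ×ˢ Set.Icc c d) :=
    hf.continuousOn.integrableOn_compact (isCompact_Icc.prod isCompact_Icc)
  exact h.mono_set (Set.prod_mono Set.Ioc_subset_Icc_self Set.Ioc_subset_Icc_self)

lemma stmt17_derivx (lam y : ℝ) (P q : Polynomial ℝ) (x : ℝ) :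
    HasDerivAt (fun x => P.eval x * Real.exp (-(lam ^ 2 * (x - y) ^ 2)) * q.eval y)
      ((P.derivative.eval x * Real.exp (-(lam ^ 2 * (x - y) ^ 2))
        + P.eval x * (Real.exp (-(lam ^ 2 * (x - y) ^ 2)) * (-(lam ^ 2 * (2 * (x - y)))))) * q.eval y) x := by
  have h1 : HasDerivAt (fun x : ℝ => -(lam ^ 2 * (x - y) ^ 2)) (-(lam ^ 2 * (2 * (x - y)))) x := by
    have := ((((hasDerivAt_id x).sub_const y).pow 2).const_mul (lam ^ 2)).neg
    simp only [id_eq] at this; exact this.congr_deriv (by push_cast; ring)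
  exact ((P.hasDerivAt x).mul h1.exp).mul_const (q.eval y)

lemma stmt17_derivy (lam x : ℝ) (P q : Polynomial ℝ) (y : ℝ) :
    HasDerivAt (fun y => P.eval x * Real.exp (-(lam ^ 2 * (x - y) ^ 2)) * q.eval y)
      (P.eval x * ((Real.exp (-(lam ^ 2 * (x - y) ^ 2)) * (lam ^ 2 * (2 * (x - y)))) * q.eval y
        + Real.exp (-(lam ^ 2 * (x - y) ^ 2)) * q.derivative.eval y)) y := by
  have h1 : HasDerivAt (fun y : ℝ => -(lam ^ 2 * (x - y) ^ 2)) (lam ^ 2 * (2 * (x - y))) y := by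
    have := ((((hasDerivAt_id y).const_sub x).pow 2).const_mul (lam ^ 2)).neg
    simp only [id_eq] at this; exact this.congr_deriv (by push_cast; ring)
  have h2 := (h1.exp.mul (q.hasDerivAt y)).const_mul (P.eval x)
  simpa [mul_assoc] using h2

/-- Reduction formula for the double Gaussian integral
`Ī(p,q) = ∫_a^b p(x) ∫_{a'}^{b'} e^{-λ²(x-y)²} q(y) dy dx`. -/
theorem stmt17 (lam a b a' b' : ℝ) (hlam : 0 < lam) (hab : a ≤ b) (hab' : a' ≤ b')
    (p q P : Polynomial ℝ) (hP : P.derivative = p) :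
    (∫ x in a..b, p.eval x *
        ∫ y in a'..b', Real.exp (-(lam ^ 2 * (x - y) ^ 2)) * q.eval y)
      = P.eval b * (∫ x in a'..b', q.eval x * Real.exp (-(lam ^ 2 * (x - b) ^ 2)))
        - P.eval a * (∫ x in a'..b', q.eval x * Real.exp (-(lam ^ 2 * (x - a) ^ 2)))
        + q.eval b' * (∫ x in a..b, P.eval x * Real.exp (-(lam ^ 2 * (x - b') ^ 2)))
        - q.eval a' * (∫ x in a..b, P.eval x * Real.exp (-(lam ^ 2 * (x - a') ^ 2)))
        - ∫ x in a..b, P.eval x *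
            ∫ y in a'..b', Real.exp (-(lam ^ 2 * (x - y) ^ 2)) * q.derivative.eval y := by
  set E : ℝ → ℝ → ℝ := fun x y => Real.exp (-(lam ^ 2 * (x - y) ^ 2)) with hE
  set D1 : ℝ → ℝ → ℝ := fun x y =>
    (p.eval x * E x y + P.eval x * (E x y * (-(lam ^ 2 * (2 * (x - y)))))) * q.eval y with hD1
  set D2 : ℝ → ℝ → ℝ := fun x y =>
    P.eval x * ((E x y * (lam ^ 2 * (2 * (x - y)))) * q.eval y
      + E x y * q.derivative.eval y) with hD2
  set D3 : ℝ → ℝ → ℝ := fun x y => P.eval x * (E x y * q.derivative.eval y) with hD3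
  have hEc : Continuous (Function.uncurry E) := by fun_prop
  have hD1c : Continuous (Function.uncurry D1) := by
    simp only [hD1, Function.uncurry]; fun_prop
  have hD2c : Continuous (Function.uncurry D2) := by
    simp only [hD2, Function.uncurry]; fun_prop
  have hD3c : Continuous (Function.uncurry D3) := by
    simp only [hD3, Function.uncurry]; fun_prop
  -- Step 1 : FTC in x, for fixed y
  have step1 : ∀ y : ℝ, ∫ x in a..b, D1 x y
      = P.eval b * E b y * q.eval y - P.eval a * E a y * q.eval y := by
    intro y
    have := intervalIntegral.integral_eq_sub_of_hasDerivAt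
      (f := fun x => P.eval x * E x y * q.eval y) (f' := fun x => D1 x y)
      (a := a) (b := b)
      (fun x _ => by simpa [hD1, hP] using stmt17_derivx lam y P q x)
      ((hD1c.comp (continuous_id.prodMk continuous_const)).intervalIntegrable a b)
    simpa using this
  -- Step 2 : FTC in y, for fixed x
  have step2 : ∀ x : ℝ, ∫ y in a'..b', D2 x y
      = P.eval x * E x b' * q.eval b' - P.eval x * E x a' * q.eval a' := by
    intro x
    have := intervalIntegral.integral_eq_sub_of_hasDerivAt
      (f := fun y => P.eval x * E x y * q.eval y) (f' := fun y => D2 x y)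
      (a := a') (b := b')
      (fun y _ => by simpa [hD2] using stmt17_derivy lam x P q y)
      ((hD2c.comp (continuous_const.prodMk continuous_id)).intervalIntegrable a' b')
    simpa using this
  -- rewrite LHS
  have key : (∫ x in a..b, p.eval x * ∫ y in a'..b', E x y * q.eval y)
      = (∫ x in a..b, ∫ y in a'..b', D1 x y)
        + (∫ x in a..b, ∫ y in a'..b', D2 x y)
        - (∫ x in a..b, ∫ y in a'..b', D3 x y) := by
    have h1 : ∀ x : ℝ, p.eval x * ∫ y in a'..b', E x y * q.eval y
        = (∫ y in a'..b', D1 x y) + (∫ y in a'..b', D2 x y) - ∫ y in a'..b', D3 x y := by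
      intro x
      have i1 : IntervalIntegrable (fun y => D1 x y) volume a' b' :=
        (show Continuous fun y => D1 x y by simp only [hD1]; fun_prop).intervalIntegrable a' b'
      have i2 : IntervalIntegrable (fun y => D2 x y) volume a' b' :=
        (show Continuous fun y => D2 x y by simp only [hD2]; fun_prop).intervalIntegrable a' b'
      have i3 : IntervalIntegrable (fun y => D3 x y) volume a' b' :=
        (show Continuous fun y => D3 x y by simp only [hD3]; fun_prop).intervalIntegrable a' b'
      rw [← intervalIntegral.integral_const_mul]
      rw [← intervalIntegral.integral_add i1 i2, ← intervalIntegral.integral_sub (i1.add i2) i3]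
      apply intervalIntegral.integral_congr
      intro y _
      simp only [hD1, hD2, hD3, Pi.add_apply, Pi.sub_apply]
      ring
    rw [intervalIntegral.integral_congr (g := fun x =>
      ((∫ y in a'..b', D1 x y) + (∫ y in a'..b', D2 x y)) - ∫ y in a'..b', D3 x y)
      (fun x _ => h1 x)]
    have c1 : Continuous fun x => ∫ y in a'..b', D1 x y :=
      intervalIntegral.continuous_parametric_intervalIntegral_of_continuous' hD1c a' b'
    have c2 : Continuous fun x => ∫ y in a'..b', D2 x y :=
      intervalIntegral.continuous_parametric_intervalIntegral_of_continuous' hD2c a' b'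
    have c3 : Continuous fun x => ∫ y in a'..b', D3 x y :=
      intervalIntegral.continuous_parametric_intervalIntegral_of_continuous' hD3c a' b'
    rw [intervalIntegral.integral_sub ((c1.intervalIntegrable a b).add
        (c2.intervalIntegrable a b)) (c3.intervalIntegrable a b),
      intervalIntegral.integral_add (c1.intervalIntegrable a b) (c2.intervalIntegrable a b)]
  -- Term 1 via Fubini
  have term1 : (∫ x in a..b, ∫ y in a'..b', D1 x y)
      = P.eval b * (∫ y in a'..b', q.eval y * Real.exp (-(lam ^ 2 * (y - b) ^ 2)))
        - P.eval a * (∫ y in a'..b', q.eval y * Real.exp (-(lam ^ 2 * (y - a) ^ 2))) := by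
    rw [stmt17_swap hD1c hab hab']
    rw [intervalIntegral.integral_congr (g := fun y =>
        P.eval b * (q.eval y * Real.exp (-(lam ^ 2 * (y - b) ^ 2)))
        - P.eval a * (q.eval y * Real.exp (-(lam ^ 2 * (y - a) ^ 2))))
      (fun y _ => by rw [step1 y]; simp only [hE]
                     rw [show (b - y) ^ 2 = (y - b) ^ 2 by ring,
                        show (a - y) ^ 2 = (y - a) ^ 2 by ring]; ring)]
    have cb : Continuous fun y : ℝ => P.eval b * (q.eval y * Real.exp (-(lam ^ 2 * (y - b) ^ 2))) := by
      fun_prop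
    have ca : Continuous fun y : ℝ => P.eval a * (q.eval y * Real.exp (-(lam ^ 2 * (y - a) ^ 2))) := by
      fun_prop
    rw [intervalIntegral.integral_sub (cb.intervalIntegrable a' b') (ca.intervalIntegrable a' b'),
      intervalIntegral.integral_const_mul, intervalIntegral.integral_const_mul]
  -- Term 2
  have term2 : (∫ x in a..b, ∫ y in a'..b', D2 x y)
      = q.eval b' * (∫ x in a..b, P.eval x * Real.exp (-(lam ^ 2 * (x - b') ^ 2)))
        - q.eval a' * (∫ x in a..b, P.eval x * Real.exp (-(lam ^ 2 * (x - a') ^ 2))) := by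
    rw [intervalIntegral.integral_congr (g := fun x =>
        q.eval b' * (P.eval x * Real.exp (-(lam ^ 2 * (x - b') ^ 2)))
        - q.eval a' * (P.eval x * Real.exp (-(lam ^ 2 * (x - a') ^ 2))))
      (fun x _ => by rw [step2 x]; simp only [hE]; ring)]
    have cb : Continuous fun x : ℝ => q.eval b' * (P.eval x * Real.exp (-(lam ^ 2 * (x - b') ^ 2))) := by
      fun_prop
    have ca : Continuous fun x : ℝ => q.eval a' * (P.eval x * Real.exp (-(lam ^ 2 * (x - a') ^ 2))) := by
      fun_prop
    rw [intervalIntegral.integral_sub (cb.intervalIntegrable a b) (ca.intervalIntegrable a b),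
      intervalIntegral.integral_const_mul, intervalIntegral.integral_const_mul]
  -- Term 3
  have term3 : (∫ x in a..b, ∫ y in a'..b', D3 x y)
      = ∫ x in a..b, P.eval x * ∫ y in a'..b', E x y * q.derivative.eval y := by
    apply intervalIntegral.integral_congr
    intro x _
    show (∫ y in a'..b', D3 x y) = P.eval x * ∫ y in a'..b', E x y * q.derivative.eval y
    exact intervalIntegral.integral_const_mul (P.eval x)
      (fun y => E x y * q.derivative.eval y)
  rw [key, term1, term2, term3]
  ring
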